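/- arXiv:2003.07991 — 2 statements merged into one kernel-verified Lean document; each statement's English description precedes it below -/
import Mathlib

section
/- Let μ_{u|y} be the idealized posterior, defined by dμ_{u|y}/dμ_u(u) ∝ exp(-(1/2)‖y - G(u)‖_Γ²), and let ν_{u|y} be the U-marginal of the joint posterior ν_{u,a|y}, which satisfies dν_{u|y}/dμ_u(u) ∝ ∫_A exp(-(1/2)‖y - G^a(u)‖_Γ²) dν_a(a). If G is bounded (sup_u ‖G(u)‖ < ∞), then there exist constants C > 0 and ε₀ > 0 (depending only on y, Γ and sup_u ‖G(u)‖, but not on ε or the family {G^a}) such that for every 0 < ε ≤ ε₀, if ‖G^a(u) - G(u)‖ < ε for (μ_u ⊗ ν_a)-almost every (u,a), then d_TV(ν_{u|y}, μ_{u|y}) ≤ Cε. -/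
open MeasureTheory Matrix

/-- The squared weighted norm `‖x‖_Γ² = ‖Γ^{-1/2} x‖² = xᵀ Γ⁻¹ x` associated to a
positive definite covariance matrix `Γ`. -/
noncomputable def wSq {m : ℕ} (Γ : Matrix (Fin m) (Fin m) ℝ) (v : EuclideanSpace ℝ (Fin m)) : ℝ :=
  (fun i => v i) ⬝ᵥ Γ⁻¹.mulVec (fun i => v i)

/-- Total variation distance between two measures:
`d_TV(μ,ν) = sup_B |μ(B) - ν(B)|` over measurable sets `B`. -/
noncomputable def tvDist {X : Type*} [MeasurableSpace X] (μ ν : Measure X) : ℝ :=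
  ⨆ B : {B : Set X // MeasurableSet B}, |(μ (B : Set X)).toReal - (ν (B : Set X)).toReal|


lemma coord_le_norm {m : ℕ} (v : EuclideanSpace ℝ (Fin m)) (i : Fin m) : |v i| ≤ ‖v‖ := by
  rw [EuclideanSpace.norm_eq, ← Real.sqrt_sq_eq_abs]
  apply Real.sqrt_le_sqrt
  have := Finset.single_le_sum (f := fun j => ‖v j‖^2) (fun j _ => sq_nonneg _) (Finset.mem_univ i)
  simpa [Real.norm_eq_abs, sq_abs] using this

lemma wsq_nonneg {m : ℕ} {Γ : Matrix (Fin m) (Fin m) ℝ} (hΓ : Γ.PosDef)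
    (v : EuclideanSpace ℝ (Fin m)) : 0 ≤ wSq Γ v := by
  have h := hΓ.inv.posSemidef.re_dotProduct_nonneg (fun i => v i)
  simpa [wSq] using h

lemma exp_lip {a b : ℝ} (ha : a ≤ 0) (hb : b ≤ 0) : |Real.exp a - Real.exp b| ≤ |a - b| := by
  wlog h : b ≤ a generalizing a b
  · rw [abs_sub_comm, abs_sub_comm a b]; exact this hb ha (le_of_not_ge h)
  rw [abs_of_nonneg (sub_nonneg.2 (Real.exp_le_exp.2 h)), abs_of_nonneg (sub_nonneg.2 h)]
  have h1 := Real.add_one_le_exp (b - a)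
  have h2 : Real.exp a ≤ 1 := Real.exp_le_one_iff.2 ha
  have h3 : Real.exp b = Real.exp a * Real.exp (b - a) := by
    rw [← Real.exp_add]; ring_nf
  nlinarith [Real.exp_pos a]

lemma dot_bound {m : ℕ} (M : Matrix (Fin m) (Fin m) ℝ) (x z : EuclideanSpace ℝ (Fin m)) :
    |(fun i => x i) ⬝ᵥ M.mulVec (fun i => z i)| ≤ (∑ i, ∑ j, |M i j|) * (‖x‖ * ‖z‖) := by
  have h1 : (fun i => x i) ⬝ᵥ M.mulVec (fun i => z i) = ∑ i, ∑ j, x i * (M i j * z j) := by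
    simp [dotProduct, Matrix.mulVec, Finset.mul_sum]
  rw [h1, Finset.sum_mul]
  refine (Finset.abs_sum_le_sum_abs _ _).trans (Finset.sum_le_sum fun i _ => ?_)
  rw [Finset.sum_mul]
  refine (Finset.abs_sum_le_sum_abs _ _).trans (Finset.sum_le_sum fun j _ => ?_)
  rw [abs_mul, abs_mul]
  have hx := coord_le_norm x i
  have hz := coord_le_norm z j
  calc |x i| * (|M i j| * |z j|) = |M i j| * (|x i| * |z j|) := by ring
    _ ≤ |M i j| * (‖x‖ * ‖z‖) :=
      mul_le_mul_of_nonneg_left (mul_le_mul hx hz (abs_nonneg _) (norm_nonneg _)) (abs_nonneg _)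

lemma wsq_diff {m : ℕ} (Γ : Matrix (Fin m) (Fin m) ℝ) (v w : EuclideanSpace ℝ (Fin m)) :
    |wSq Γ v - wSq Γ w| ≤ (∑ i, ∑ j, |Γ⁻¹ i j|) * ((‖v‖ + ‖w‖) * ‖v - w‖) := by
  set K := ∑ i, ∑ j, |Γ⁻¹ i j| with hK
  have hsplit : wSq Γ v - wSq Γ w =
      ((fun i => (v - w) i) ⬝ᵥ Γ⁻¹.mulVec (fun i => v i)) +
      ((fun i => w i) ⬝ᵥ Γ⁻¹.mulVec (fun i => (v - w) i)) := by
    have hvw : (fun i => (v - w) i) = (fun i => v i) - (fun i => w i) := by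
      funext i; simp
    rw [hvw, sub_dotProduct, Matrix.mulVec_sub, dotProduct_sub]
    simp [wSq]
  rw [hsplit]
  have h1 := dot_bound Γ⁻¹ (v - w) v
  have h2 := dot_bound Γ⁻¹ w (v - w)
  calc |_| ≤ _ + _ := abs_add_le _ _
    _ ≤ K * (‖v - w‖ * ‖v‖) + K * (‖w‖ * ‖v - w‖) := add_le_add h1 h2
    _ = K * ((‖v‖ + ‖w‖) * ‖v - w‖) := by ring

lemma wsq_le {m : ℕ} {Γ : Matrix (Fin m) (Fin m) ℝ}
    (v : EuclideanSpace ℝ (Fin m)) : wSq Γ v ≤ (∑ i, ∑ j, |Γ⁻¹ i j|) * (‖v‖ * ‖v‖) :=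
  le_trans (le_abs_self _) (dot_bound Γ⁻¹ v v)

lemma wSq_cont {m : ℕ} (Γ : Matrix (Fin m) (Fin m) ℝ) : Continuous (wSq Γ) := by
  have h : wSq Γ = fun v => ∑ i, v i * ∑ j, Γ⁻¹ i j * v j := rfl
  rw [h]
  refine continuous_finset_sum _ fun i _ => ((EuclideanSpace.proj i).continuous.mul ?_)
  exact continuous_finset_sum _ fun j _ => continuous_const.mul (EuclideanSpace.proj j).continuous

lemma tv_bound {U : Type*} [MeasurableSpace U] (μ : Measure U) [IsProbabilityMeasure μ]
    (f g : U → ℝ) (hf : Integrable f μ) (hg : Integrable g μ)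
    (hf0 : 0 ≤ᵐ[μ] f) (hg0 : 0 ≤ᵐ[μ] g) {c : ℝ} (hc : 0 ≤ c)
    (hfg : ∀ᵐ u ∂μ, |f u - g u| ≤ c) :
    tvDist (μ.withDensity fun u => ENNReal.ofReal (f u))
      (μ.withDensity fun u => ENNReal.ofReal (g u)) ≤ c := by
  have hne : Nonempty {B : Set U // MeasurableSet B} := ⟨⟨∅, MeasurableSet.empty⟩⟩
  refine ciSup_le fun B => ?_
  obtain ⟨B, hB⟩ := B
  have hfB : ((μ.withDensity fun u => ENNReal.ofReal (f u)) B).toReal = ∫ u in B, f u ∂μ := by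
    rw [withDensity_apply _ hB,
      ← ofReal_integral_eq_lintegral_ofReal (hf.restrict) (ae_restrict_of_ae hf0),
      ENNReal.toReal_ofReal (integral_nonneg_of_ae (ae_restrict_of_ae hf0))]
  have hgB : ((μ.withDensity fun u => ENNReal.ofReal (g u)) B).toReal = ∫ u in B, g u ∂μ := by
    rw [withDensity_apply _ hB,
      ← ofReal_integral_eq_lintegral_ofReal (hg.restrict) (ae_restrict_of_ae hg0),
      ENNReal.toReal_ofReal (integral_nonneg_of_ae (ae_restrict_of_ae hg0))]
  simp only [hfB, hgB]
  rw [← integral_sub hf.restrict hg.restrict]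
  have h1 : |∫ u in B, (f u - g u) ∂μ| ≤ c * ((μ.restrict B) Set.univ).toReal := by
    have := norm_integral_le_of_norm_le_const (μ := μ.restrict B) (f := fun u => f u - g u)
      (C := c) (ae_restrict_of_ae (hfg.mono fun u h => by simpa [Real.norm_eq_abs] using h))
    simpa [Real.norm_eq_abs, measureReal_def] using this
  have h2 : ((μ.restrict B) Set.univ).toReal ≤ 1 := by
    rw [Measure.restrict_apply_univ]
    have h3 : μ B ≤ 1 := prob_le_one
    calc (μ B).toReal ≤ (1 : ENNReal).toReal := ENNReal.toReal_mono ENNReal.one_ne_top h3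
      _ = 1 := by simp
  calc |∫ u in B, (f u - g u) ∂μ| ≤ c * ((μ.restrict B) Set.univ).toReal := h1
    _ ≤ c * 1 := mul_le_mul_of_nonneg_left h2 hc
    _ = c := mul_one c

lemma density_tv_aux {U : Type*} [MeasurableSpace U] (μ : Measure U) [IsProbabilityMeasure μ]
    (I e : U → ℝ) (hI : Integrable I μ) (he : Integrable e μ)
    {δ κ : ℝ} (hδ : 0 < δ)
    (hI0 : ∀ u, 0 ≤ I u) (hI1 : ∀ u, I u ≤ 1)
    (he1 : ∀ u, e u ≤ 1) (heδ : ∀ u, δ ≤ e u)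
    (hIδ : ∀ᵐ u ∂μ, δ/2 ≤ I u)
    (hκ : 0 ≤ κ)
    (hIe : ∀ᵐ u ∂μ, |I u - e u| ≤ κ) :
    tvDist (μ.withDensity fun u => ENNReal.ofReal (I u / ∫ u', I u' ∂μ))
      (μ.withDensity fun u => ENNReal.ofReal (e u / ∫ u', e u' ∂μ))
      ≤ 2*κ/δ + 2*κ/(δ*δ) := by
  set ZI := ∫ u', I u' ∂μ with hZIdef
  set Ze := ∫ u', e u' ∂μ with hZedef
  have hZI : δ/2 ≤ ZI := by
    have h1 : ∫ _u', (δ/2) ∂μ ≤ ZI := integral_mono_ae (integrable_const _) hI hIδ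
    simpa [measure_univ] using h1
  have hZe : δ ≤ Ze := by
    have h1 : ∫ _u', δ ∂μ ≤ Ze := integral_mono (integrable_const _) he heδ
    simpa [measure_univ] using h1
  have hZI0 : 0 < ZI := lt_of_lt_of_le (by positivity) hZI
  have hZe0 : 0 < Ze := lt_of_lt_of_le hδ hZe
  have hZd : |ZI - Ze| ≤ κ := by
    have h2 : ZI - Ze = ∫ u, (I u - e u) ∂μ := (integral_sub hI he).symm
    rw [h2]
    have h3 := norm_integral_le_of_norm_le_const (μ := μ) (f := fun u => I u - e u)
      (C := κ) (hIe.mono fun u h => by simpa [Real.norm_eq_abs] using h)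
    simpa [Real.norm_eq_abs, measure_univ] using h3
  refine tv_bound μ _ _ (hI.div_const _) (he.div_const _)
    (Filter.Eventually.of_forall fun u => div_nonneg (hI0 u) hZI0.le)
    (Filter.Eventually.of_forall fun u => div_nonneg (le_trans hδ.le (heδ u)) hZe0.le)
    (by positivity) ?_
  filter_upwards [hIe] with u hu2
  have key : I u / ZI - e u / Ze = (I u - e u)/ZI + (e u * (Ze - ZI))/(ZI * Ze) := by
    field_simp
    ring
  rw [key]
  have hb1 : |(I u - e u)/ZI| ≤ κ/(δ/2) := by
    rw [abs_div, abs_of_pos hZI0]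
    exact div_le_div₀ hκ hu2 (by positivity) hZI
  have hb2 : |(e u * (Ze - ZI))/(ZI * Ze)| ≤ κ/((δ/2)*δ) := by
    rw [abs_div, abs_mul, abs_of_pos (mul_pos hZI0 hZe0)]
    have heu : |e u| ≤ 1 := abs_le.2 ⟨by linarith [heδ u], he1 u⟩
    have hZZ : |Ze - ZI| ≤ κ := by rw [abs_sub_comm]; exact hZd
    have hnum : |e u| * |Ze - ZI| ≤ 1 * κ :=
      mul_le_mul heu hZZ (abs_nonneg _) zero_le_one
    have hden : (δ/2)*δ ≤ ZI * Ze := mul_le_mul hZI hZe hδ.le hZI0.le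
    exact div_le_div₀ hκ (by linarith) (by positivity) hden
  calc |(I u - e u)/ZI + (e u * (Ze - ZI))/(ZI * Ze)|
      ≤ |(I u - e u)/ZI| + |(e u * (Ze - ZI))/(ZI * Ze)| := abs_add_le _ _
    _ ≤ κ/(δ/2) + κ/((δ/2)*δ) := add_le_add hb1 hb2
    _ = 2*κ/δ + 2*κ/(δ*δ) := by field_simp

set_option maxHeartbeats 1000000 in
/-- Well-posedness of the posterior (general, possibly infinite-dimensional version).
With `dμ_{u|y}/dμ_u ∝ exp(-(1/2)‖y-G(u)‖_Γ²)` and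
`dν_{u|y}/dμ_u ∝ ∫_A exp(-(1/2)‖y-Gᵃ(u)‖_Γ²) dν_a(a)`, if `G` is bounded (`‖G(u)‖ ≤ R`), then
there are `C > 0` and `ε₀ > 0` (independent of `ε` and of the family `{Gᵃ}`) such that for all
`0 < ε ≤ ε₀`, if `‖Gᵃ(u) - G(u)‖ < ε` for `(μ_u ⊗ ν_a)`-a.e. `(u,a)`, then
`d_TV(ν_{u|y}, μ_{u|y}) ≤ C ε`. -/
theorem stmt3 {m : ℕ} (Γ : Matrix (Fin m) (Fin m) ℝ) (hΓ : Γ.PosDef)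
    (y : EuclideanSpace ℝ (Fin m))
    {U A : Type*} [MeasurableSpace U] [StandardBorelSpace U]
    [MeasurableSpace A] [StandardBorelSpace A]
    (μu : Measure U) [IsProbabilityMeasure μu] (νa : Measure A) [IsProbabilityMeasure νa]
    (G : U → EuclideanSpace ℝ (Fin m)) (hG : Measurable G)
    (R : ℝ) (hGbd : ∀ u, ‖G u‖ ≤ R) :
    ∃ C > (0 : ℝ), ∃ ε₀ > (0 : ℝ),
      ∀ (Ga : A → U → EuclideanSpace ℝ (Fin m)),
        Measurable (fun p : U × A => Ga p.2 p.1) →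
      ∀ (ε : ℝ), 0 < ε → ε ≤ ε₀ →
        (∀ᵐ p ∂(μu.prod νa), ‖Ga p.2 p.1 - G p.1‖ < ε) →
        tvDist
          (μu.withDensity fun u => ENNReal.ofReal
            ((∫ a, Real.exp (-(1/2) * wSq Γ (y - Ga a u)) ∂νa) /
              (∫ u', (∫ a, Real.exp (-(1/2) * wSq Γ (y - Ga a u')) ∂νa) ∂μu)))
          (μu.withDensity fun u => ENNReal.ofReal
            (Real.exp (-(1/2) * wSq Γ (y - G u)) /
              (∫ u', Real.exp (-(1/2) * wSq Γ (y - G u')) ∂μu)))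
          ≤ C * ε := by
  have hUne : Nonempty U := by
    by_contra h
    have h0 : μu Set.univ = 0 := by
      rw [Set.univ_eq_empty_iff.2 (not_nonempty_iff.1 h)]; exact measure_empty
    rw [measure_univ] at h0; exact one_ne_zero h0
  have hR0 : 0 ≤ R := le_trans (norm_nonneg _) (hGbd (Classical.arbitrary U))
  obtain ⟨K, hKdef⟩ : ∃ K, K = ∑ i, ∑ j, |Γ⁻¹ i j| := ⟨_, rfl⟩
  have hK0 : 0 ≤ K := hKdef ▸
    Finset.sum_nonneg fun i _ => Finset.sum_nonneg fun j _ => abs_nonneg _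
  obtain ⟨M0, hM0def⟩ : ∃ M0 : ℝ, M0 = ‖y‖ + R := ⟨_, rfl⟩
  have hM00 : 0 ≤ M0 := by rw [hM0def]; positivity
  obtain ⟨δ, hδdef⟩ : ∃ δ, δ = Real.exp (-(1/2) * (K * ((M0+1) * (M0+1)))) := ⟨_, rfl⟩
  have hδ0 : 0 < δ := hδdef ▸ Real.exp_pos _
  obtain ⟨c1, hc1def⟩ : ∃ c1, c1 = K * (M0 + 1) := ⟨_, rfl⟩
  have hc10 : 0 ≤ c1 := by rw [hc1def]; exact mul_nonneg hK0 (by linarith)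
  obtain ⟨C0, hC0def⟩ : ∃ C0, C0 = 2*c1/δ + 2*c1/(δ*δ) := ⟨_, rfl⟩
  have hC00 : 0 ≤ C0 := by rw [hC0def]; positivity
  refine ⟨C0 + 1, by positivity, min 1 (δ/(2*(c1+1))), by positivity, ?_⟩
  intro Ga hGa ε hε hεε₀ hae
  have hε1 : ε ≤ 1 := le_trans hεε₀ (min_le_left _ _)
  have hεδ : ε ≤ δ/(2*(c1+1)) := le_trans hεε₀ (min_le_right _ _)
  have hc1ε : c1 * ε ≤ δ/2 := by
    have h1 : c1 * ε ≤ c1 * (δ/(2*(c1+1))) := mul_le_mul_of_nonneg_left hεδ hc10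
    have hpos : (0:ℝ) < 2*(c1+1) := by positivity
    have h2 : c1 * (δ/(2*(c1+1))) ≤ δ/2 := by
      rw [mul_div_assoc', div_le_div_iff₀ hpos (by norm_num : (0:ℝ) < 2)]
      nlinarith
    linarith
  -- measurability
  have hme : Measurable (fun u => Real.exp (-(1/2) * wSq Γ (y - G u))) :=
    Real.measurable_exp.comp (((wSq_cont Γ).measurable.comp (hG.const_sub y)).const_mul _)
  have hmF : Measurable (fun p : U × A => Real.exp (-(1/2) * wSq Γ (y - Ga p.2 p.1))) :=
    Real.measurable_exp.comp (((wSq_cont Γ).measurable.comp (hGa.const_sub y)).const_mul _)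
  have hmI : Measurable (fun u => ∫ a, Real.exp (-(1/2) * wSq Γ (y - Ga a u)) ∂νa) :=
    (hmF.stronglyMeasurable.integral_prod_right').measurable
  -- pointwise bounds on e
  have hexple1 : ∀ (v : EuclideanSpace ℝ (Fin m)), Real.exp (-(1/2) * wSq Γ v) ≤ 1 := by
    intro v
    refine Real.exp_le_one_iff.2 ?_
    nlinarith [wsq_nonneg hΓ v]
  have heδ : ∀ u, δ ≤ Real.exp (-(1/2) * wSq Γ (y - G u)) := by
    intro u
    have h1 : wSq Γ (y - G u) ≤ K * (‖y - G u‖ * ‖y - G u‖) := hKdef ▸ wsq_le (Γ := Γ) (y - G u)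
    have h2 : ‖y - G u‖ ≤ M0 := le_trans (norm_sub_le _ _) (by rw [hM0def]; linarith [hGbd u])
    have h3 : (0:ℝ) ≤ ‖y - G u‖ := norm_nonneg _
    have h4 : ‖y - G u‖ * ‖y - G u‖ ≤ (M0+1) * (M0+1) := by nlinarith
    have h5 : K * (‖y - G u‖ * ‖y - G u‖) ≤ K * ((M0+1) * (M0+1)) :=
      mul_le_mul_of_nonneg_left h4 hK0
    rw [hδdef]
    refine Real.exp_le_exp.2 ?_
    linarith
  -- integrability of sections
  have intsec : ∀ u, Integrable (fun a => Real.exp (-(1/2) * wSq Γ (y - Ga a u))) νa := by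
    intro u
    refine Integrable.mono' (integrable_const 1)
      (hmF.comp (measurable_prodMk_left (x := u))).aestronglyMeasurable
      (Filter.Eventually.of_forall fun a => ?_)
    rw [Real.norm_eq_abs, abs_of_pos (Real.exp_pos _)]
    exact hexple1 _
  have hI0 : ∀ u, 0 ≤ ∫ a, Real.exp (-(1/2) * wSq Γ (y - Ga a u)) ∂νa :=
    fun u => integral_nonneg fun a => (Real.exp_pos _).le
  have hI1 : ∀ u, (∫ a, Real.exp (-(1/2) * wSq Γ (y - Ga a u)) ∂νa) ≤ 1 := by
    intro u
    have h1 := norm_integral_le_of_norm_le_const (μ := νa)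
      (f := fun a => Real.exp (-(1/2) * wSq Γ (y - Ga a u))) (C := 1)
      (Filter.Eventually.of_forall fun a => by
        rw [Real.norm_eq_abs, abs_of_pos (Real.exp_pos _)]; exact hexple1 _)
    rw [Real.norm_eq_abs] at h1
    calc (∫ a, Real.exp (-(1/2) * wSq Γ (y - Ga a u)) ∂νa)
        ≤ |∫ a, Real.exp (-(1/2) * wSq Γ (y - Ga a u)) ∂νa| := le_abs_self _
      _ ≤ 1 := by simpa [measure_univ] using h1
  have intI : Integrable (fun u => ∫ a, Real.exp (-(1/2) * wSq Γ (y - Ga a u)) ∂νa) μu := by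
    refine Integrable.mono' (integrable_const 1) hmI.aestronglyMeasurable
      (Filter.Eventually.of_forall fun u => ?_)
    rw [Real.norm_eq_abs, abs_of_nonneg (hI0 u)]; exact hI1 u
  have inte : Integrable (fun u => Real.exp (-(1/2) * wSq Γ (y - G u))) μu := by
    refine Integrable.mono' (integrable_const 1) hme.aestronglyMeasurable
      (Filter.Eventually.of_forall fun u => ?_)
    rw [Real.norm_eq_abs, abs_of_pos (Real.exp_pos _)]; exact hexple1 _
  -- a.e. closeness
  have hae2 : ∀ᵐ u ∂μu, ∀ᵐ a ∂νa, ‖Ga a u - G u‖ < ε := Measure.ae_ae_of_ae_prod hae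
  have hIea : ∀ᵐ u ∂μu,
      |(∫ a, Real.exp (-(1/2) * wSq Γ (y - Ga a u)) ∂νa) -
        Real.exp (-(1/2) * wSq Γ (y - G u))| ≤ c1 * ε := by
    filter_upwards [hae2] with u hu
    have hsub : (∫ a, Real.exp (-(1/2) * wSq Γ (y - Ga a u)) ∂νa) -
        Real.exp (-(1/2) * wSq Γ (y - G u)) =
        ∫ a, (Real.exp (-(1/2) * wSq Γ (y - Ga a u)) -
          Real.exp (-(1/2) * wSq Γ (y - G u))) ∂νa := by
      rw [integral_sub (intsec u) (integrable_const _), integral_const]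
      simp [measure_univ]
    rw [hsub]
    have hbd : ∀ᵐ a ∂νa, ‖Real.exp (-(1/2) * wSq Γ (y - Ga a u)) -
        Real.exp (-(1/2) * wSq Γ (y - G u))‖ ≤ c1 * ε := by
      filter_upwards [hu] with a ha
      rw [Real.norm_eq_abs]
      have h1 : |Real.exp (-(1/2) * wSq Γ (y - Ga a u)) -
          Real.exp (-(1/2) * wSq Γ (y - G u))| ≤
          |(-(1/2) * wSq Γ (y - Ga a u)) - (-(1/2) * wSq Γ (y - G u))| :=
        exp_lip (by nlinarith [wsq_nonneg hΓ (y - Ga a u)])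
          (by nlinarith [wsq_nonneg hΓ (y - G u)])
      have h2 : |(-(1/2) * wSq Γ (y - Ga a u)) - (-(1/2) * wSq Γ (y - G u))| =
          (1/2) * |wSq Γ (y - Ga a u) - wSq Γ (y - G u)| := by
        rw [← abs_neg]
        rw [show -((-(1/2) * wSq Γ (y - Ga a u)) - (-(1/2) * wSq Γ (y - G u))) =
          (1/2) * (wSq Γ (y - Ga a u) - wSq Γ (y - G u)) by ring]
        rw [abs_mul]
        norm_num
      have h3 : |wSq Γ (y - Ga a u) - wSq Γ (y - G u)| ≤
          K * ((‖y - Ga a u‖ + ‖y - G u‖) * ‖(y - Ga a u) - (y - G u)‖) :=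
        hKdef ▸ wsq_diff Γ (y - Ga a u) (y - G u)
      have h4 : (y - Ga a u) - (y - G u) = G u - Ga a u := by abel
      rw [h4] at h3
      have h5 : ‖G u - Ga a u‖ ≤ ε := by rw [norm_sub_rev]; exact ha.le
      have h6 : ‖Ga a u‖ ≤ R + ε := by
        have := norm_sub_norm_le (Ga a u) (G u)
        linarith [hGbd u, ha.le]
      have h7 : ‖y - Ga a u‖ ≤ M0 + 1 := by
        have := norm_sub_le y (Ga a u)
        rw [hM0def]; linarith
      have h8 : ‖y - G u‖ ≤ M0 + 1 := by
        have := norm_sub_le y (G u)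
        rw [hM0def]; linarith [hGbd u]
      have h9 : K * ((‖y - Ga a u‖ + ‖y - G u‖) * ‖G u - Ga a u‖) ≤
          K * ((2*(M0+1)) * ε) := by
        have hn1 : (0:ℝ) ≤ ‖y - Ga a u‖ + ‖y - G u‖ := by positivity
        have hn2 : (0:ℝ) ≤ ‖G u - Ga a u‖ := norm_nonneg _
        have hs : ‖y - Ga a u‖ + ‖y - G u‖ ≤ 2*(M0+1) := by linarith
        have := mul_le_mul hs h5 hn2 (by positivity)
        exact mul_le_mul_of_nonneg_left this hK0
      rw [hc1def]
      calc |Real.exp (-(1/2) * wSq Γ (y - Ga a u)) - Real.exp (-(1/2) * wSq Γ (y - G u))|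
          ≤ (1/2) * |wSq Γ (y - Ga a u) - wSq Γ (y - G u)| := by rw [← h2]; exact h1
        _ ≤ (1/2) * (K * ((2*(M0+1)) * ε)) := by
            have := le_trans h3 h9
            linarith
        _ = K * (M0 + 1) * ε := by ring
    have := norm_integral_le_of_norm_le_const (μ := νa) hbd
    simpa [Real.norm_eq_abs, measure_univ] using this
  have hIδa : ∀ᵐ u ∂μu, δ/2 ≤ ∫ a, Real.exp (-(1/2) * wSq Γ (y - Ga a u)) ∂νa := by
    filter_upwards [hIea] with u hu
    have h1 := (abs_le.1 hu).1
    have h2 := heδ u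
    linarith
  have hmain := density_tv_aux μu
    (fun u => ∫ a, Real.exp (-(1/2) * wSq Γ (y - Ga a u)) ∂νa)
    (fun u => Real.exp (-(1/2) * wSq Γ (y - G u)))
    intI inte hδ0 hI0 hI1 (fun u => hexple1 _) heδ hIδa
    (mul_nonneg hc10 hε.le) hIea
  have hfinal : 2*(c1*ε)/δ + 2*(c1*ε)/(δ*δ) ≤ (C0 + 1) * ε := by
    have heq : 2*(c1*ε)/δ + 2*(c1*ε)/(δ*δ) = C0 * ε := by rw [hC0def]; ring
    rw [heq]; nlinarith
  exact le_trans hmain hfinal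
end

section
/- Define the normalizing constants Z := ∫_U exp(-(1/2)‖y - G(u)‖_Γ²) dμ_u(u) and Z̃ := ∫_{U×A} exp(-(1/2)‖y - G^a(u)‖_Γ²) d(μ_u ⊗ ν_a)(u,a). There exists a constant C > 0, depending only on Γ and not on ε, y, or the maps G, {G^a}, such that for every ε > 0: if ‖G^a(u) - G(u)‖ < ε for (μ_u ⊗ ν_a)-almost every (u,a), then |Z̃ - Z| ≤ Cε. -/
open MeasureTheory Matrix

set_option maxHeartbeats 1000000
set_option synthInstance.maxHeartbeats 1000000

/-- The one-dimensional Gaussian profile is 1-Lipschitz. -/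
lemma lip_gauss : LipschitzWith 1 (fun t : ℝ => Real.exp (-(1/2) * t^2)) := by
  have hd : ∀ t : ℝ, HasDerivAt (fun t : ℝ => Real.exp (-(1/2) * t^2))
      (-t * Real.exp (-(1/2) * t^2)) t := by
    intro t
    have h1 : HasDerivAt (fun t : ℝ => -(1/2) * t^2) (-t) t := by
      have := (hasDerivAt_pow 2 t).const_mul (-(1/2) : ℝ)
      simpa using this.congr_deriv (by ring)
    simpa [mul_comm] using h1.exp
  apply lipschitzWith_of_nnnorm_deriv_le (fun t => (hd t).differentiableAt)
  intro t
  rw [(hd t).deriv, ← NNReal.coe_le_coe]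
  have h2 : |t| ≤ Real.exp ((1/2) * t^2) := by
    have := Real.add_one_le_exp ((1/2) * t^2)
    nlinarith [sq_abs t, sq_nonneg (|t| - 1)]
  have h3 : ‖-t * Real.exp (-(1/2) * t^2)‖ ≤ 1 := by
    rw [norm_mul, norm_neg, Real.norm_eq_abs, Real.norm_eq_abs,
      abs_of_pos (Real.exp_pos _)]
    have : Real.exp (-(1/2) * t^2) = (Real.exp ((1/2) * t^2))⁻¹ := by
      rw [← Real.exp_neg]; ring_nf
    rw [this, ← div_eq_mul_inv, div_le_one (Real.exp_pos _)]
    exact h2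
  simpa using h3

/-- Stability of the normalizing constants: with
`Z = ∫_U exp(-(1/2)‖y - G(u)‖_Γ²) dμ_u` and
`Z̃ = ∫_{U×A} exp(-(1/2)‖y - Gᵃ(u)‖_Γ²) d(μ_u ⊗ ν_a)`, there is a constant `C > 0` depending
only on `Γ` (not on `ε`, `y`, or the maps `G`, `{Gᵃ}`) such that whenever
`‖Gᵃ(u) - G(u)‖ < ε` for `(μ_u ⊗ ν_a)`-a.e. `(u,a)`, we have `|Z̃ - Z| ≤ C ε`. -/
theorem stmt6 {m : ℕ} (Γ : Matrix (Fin m) (Fin m) ℝ) (hΓ : Γ.PosDef)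
    {U A : Type*} [MeasurableSpace U] [MeasurableSpace A] :
    ∃ C > (0 : ℝ),
      ∀ (μu : Measure U) (νa : Measure A),
        IsProbabilityMeasure μu → IsProbabilityMeasure νa →
      ∀ (G : U → EuclideanSpace ℝ (Fin m)) (Ga : A → U → EuclideanSpace ℝ (Fin m)),
        Measurable G → Measurable (fun p : U × A => Ga p.2 p.1) →
      ∀ (y : EuclideanSpace ℝ (Fin m)) (ε : ℝ), 0 < ε →
        (∀ᵐ p ∂(μu.prod νa), ‖Ga p.2 p.1 - G p.1‖ < ε) →
        |(∫ p, Real.exp (-(1/2) * wSq Γ (y - Ga p.2 p.1)) ∂(μu.prod νa))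
            - (∫ u, Real.exp (-(1/2) * wSq Γ (y - G u)) ∂μu)| ≤ C * ε := by
  classical
  -- the symmetric square root of `Γ⁻¹`
  have hinv : (Γ⁻¹).PosDef := hΓ.inv
  obtain ⟨S, hSherm', -, hSsq'⟩ := open scoped MatrixOrder in
    CFC.exists_sqrt_of_isSelfAdjoint_of_quasispectrumRestricts hinv.posSemidef.isHermitian
      (QuasispectrumRestricts.nnreal_of_nonneg hinv.posSemidef.nonneg)
  have hSherm : S.IsHermitian := hSherm'
  have hSsq : S * S = Γ⁻¹ := hSsq'
  -- the associated continuous linear map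
  set L : EuclideanSpace ℝ (Fin m) →L[ℝ] EuclideanSpace ℝ (Fin m) :=
    LinearMap.toContinuousLinearMap (Matrix.toEuclideanLin S) with hL
  -- key identity : wSq Γ v = ‖L v‖ ^ 2
  have key : ∀ v : EuclideanSpace ℝ (Fin m), wSq Γ v = ‖L v‖ ^ 2 := by
    intro v
    have hLv : (fun i => L v i) = S.mulVec (fun i => v i) := by
      simp [hL, Matrix.toEuclideanLin_apply, WithLp.equiv]
    have hnorm : ‖L v‖ ^ 2 = ∑ i, (L v i) ^ 2 := by
      rw [EuclideanSpace.norm_eq, Real.sq_sqrt (by positivity)]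
      simp [Real.norm_eq_abs, sq_abs]
    rw [wSq, hnorm, ← hSsq, ← Matrix.mulVec_mulVec, Matrix.dotProduct_mulVec]
    have hSt : Sᵀ = S := by
      have := hSherm
      rwa [Matrix.IsHermitian, Matrix.conjTranspose_eq_transpose_of_trivial] at this
    rw [← hSt, Matrix.vecMul_transpose, hSt]
    simp [hLv, dotProduct, sq]
  -- the Gaussian density as a function of `v`
  set F : EuclideanSpace ℝ (Fin m) → ℝ := fun v => Real.exp (-(1/2) * ‖L v‖ ^ 2) with hF
  have hFeq : ∀ v, Real.exp (-(1/2) * wSq Γ v) = F v := fun v => by rw [key v]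
  have lipF : LipschitzWith (1 * (1 * ‖L‖₊)) F :=
    lip_gauss.comp (lipschitzWith_one_norm.comp L.lipschitz)
  have lipF' : ∀ v w, |F v - F w| ≤ ‖L‖ * ‖v - w‖ := by
    intro v w
    have := lipF.dist_le_mul v w
    simpa [Real.dist_eq, dist_eq_norm] using this
  have hFle : ∀ v, |F v| ≤ 1 := by
    intro v
    have : -(1/2) * ‖L v‖ ^ 2 ≤ 0 := by nlinarith [sq_nonneg ‖L v‖]
    rw [hF, abs_of_pos (Real.exp_pos _)]
    calc Real.exp (-(1/2) * ‖L v‖ ^ 2) ≤ Real.exp 0 := Real.exp_le_exp.2 this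
    _ = 1 := Real.exp_zero
  have hFcont : Continuous F := lipF.continuous
  refine ⟨‖L‖ + 1, by have := norm_nonneg L; linarith, ?_⟩
  intro μu νa hμ hν G Ga hG hGa y ε hε hae
  simp only [hFeq]
  -- integrability
  have hmeas1 : Measurable fun p : U × A => F (y - Ga p.2 p.1) :=
    hFcont.measurable.comp (measurable_const.sub hGa)
  have hmeas2 : Measurable fun u : U => F (y - G u) :=
    hFcont.measurable.comp (measurable_const.sub hG)
  have hint1 : Integrable (fun p : U × A => F (y - Ga p.2 p.1)) (μu.prod νa) :=
    (integrable_const (1 : ℝ)).mono' hmeas1.aestronglyMeasurable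
      (Filter.Eventually.of_forall fun p => by simpa using hFle _)
  have hint2' : Integrable (fun u : U => F (y - G u)) μu :=
    (integrable_const (1 : ℝ)).mono' hmeas2.aestronglyMeasurable
      (Filter.Eventually.of_forall fun u => by simpa using hFle _)
  have hint2 : Integrable (fun p : U × A => F (y - G p.1)) (μu.prod νa) :=
    (integrable_const (1 : ℝ)).mono'
      ((hFcont.measurable.comp (measurable_const.sub (hG.comp measurable_fst))).aestronglyMeasurable)
      (Filter.Eventually.of_forall fun p => by simpa using hFle _)
  -- replace the second integral by an integral over the product
  have hmap : (μu.prod νa).map Prod.fst = μu := by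
    rw [Measure.map_fst_prod]; simp [measure_univ]
  have hsnd : ∫ p : U × A, F (y - G p.1) ∂(μu.prod νa) = ∫ u, F (y - G u) ∂μu := by
    conv_rhs => rw [← hmap]
    rw [integral_map measurable_fst.aemeasurable hmeas2.aestronglyMeasurable]
  rw [← hsnd, ← integral_sub hint1 hint2]
  have hbound : ∀ᵐ p ∂(μu.prod νa),
      ‖F (y - Ga p.2 p.1) - F (y - G p.1)‖ ≤ ‖L‖ * ε := by
    filter_upwards [hae] with p hp
    have h1 : (y - Ga p.2 p.1) - (y - G p.1) = -(Ga p.2 p.1 - G p.1) := by abel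
    calc ‖F (y - Ga p.2 p.1) - F (y - G p.1)‖
        ≤ ‖L‖ * ‖(y - Ga p.2 p.1) - (y - G p.1)‖ := by
          simpa [Real.norm_eq_abs] using lipF' (y - Ga p.2 p.1) (y - G p.1)
      _ = ‖L‖ * ‖Ga p.2 p.1 - G p.1‖ := by rw [h1, norm_neg]
      _ ≤ ‖L‖ * ε := by
          exact mul_le_mul_of_nonneg_left hp.le (norm_nonneg L)
  have := norm_integral_le_of_norm_le_const hbound
  rw [probReal_univ, mul_one] at this
  calc |∫ p, (F (y - Ga p.2 p.1) - F (y - G p.1)) ∂(μu.prod νa)|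
      ≤ ‖L‖ * ε := by simpa [Real.norm_eq_abs] using this
    _ ≤ (‖L‖ + 1) * ε := by have := norm_nonneg L; nlinarith
end
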